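/- arXiv:1905.08504 — 2 statements merged into one kernel-verified Lean document; each statement's English description precedes it below -/
import Mathlib

section
/- Unconditional energy dissipation of the semi-discrete SAV/Crank-Nicolson scheme in an abstract Hilbert space setting: let H be a real Hilbert space with inner product ⟨·,·⟩, let A, B : dom ⊂ H → H be symmetric positive semidefinite operators, λ, M, ν, Δt > 0. Suppose sequences φⁿ, μⁿ⁺¹ᐟ², rⁿ ∈ ℝ, uⁿ satisfy: (φⁿ⁺¹−φⁿ)/Δt = −M A μⁿ⁺¹ᐟ² − c with ⟨c, μⁿ⁺¹ᐟ²⟩ = ⟨g, uⁿ⁺¹ᐟ²⟩ for some g; μⁿ⁺¹ᐟ² = λ B φⁿ⁺¹ᐟ² + λ (rⁿ⁺¹ᐟ²/√E) f; (rⁿ⁺¹−rⁿ)/Δt = ⟨f, (φⁿ⁺¹−φⁿ)/Δt⟩/(2√E); (uⁿ⁺¹−uⁿ)/Δt = −ν D uⁿ⁺¹ᐟ² + g with D symmetric positive semidefinite and the pressure/incompressibility terms pairing to zero against uⁿ⁺¹ᐟ². Here xⁿ⁺¹ᐟ² := (xⁿ+xⁿ⁺¹)/2. Then the discrete energy Ẽⁿ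 = ½‖uⁿ‖² + (λ/2)⟨Bφⁿ, φⁿ⟩ + λ(rⁿ)² satisfies Ẽⁿ⁺¹ − Ẽⁿ = −Δt(M⟨Aμⁿ⁺¹ᐟ², μⁿ⁺¹ᐟ²⟩ + ν⟨Duⁿ⁺¹ᐟ², uⁿ⁺¹ᐟ²⟩) ≤ 0. -/
open scoped RealInnerProductSpace

/-- Unconditional energy dissipation of the semi-discrete SAV/Crank-Nicolson scheme
    in an abstract Hilbert space setting. Here `μ n` plays the role of μ^{n+1/2}. -/
theorem stmt_6 {H : Type*} [NormedAddCommGroup H] [InnerProductSpace ℝ H] [CompleteSpace H]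
    (A B D : H →ₗ[ℝ] H)
    (hAsym : ∀ x y : H, ⟪A x, y⟫ = ⟪x, A y⟫) (hApsd : ∀ x : H, 0 ≤ ⟪A x, x⟫)
    (hBsym : ∀ x y : H, ⟪B x, y⟫ = ⟪x, B y⟫) (hBpsd : ∀ x : H, 0 ≤ ⟪B x, x⟫)
    (hDsym : ∀ x y : H, ⟪D x, y⟫ = ⟪x, D y⟫) (hDpsd : ∀ x : H, 0 ≤ ⟪D x, x⟫)
    (lam M ν Δt : ℝ) (hlam : 0 < lam) (hM : 0 < M) (hν : 0 < ν) (hΔt : 0 < Δt)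
    (φ u μ c g f : ℕ → H) (r E : ℕ → ℝ) (hE : ∀ n, 0 < E n)
    (h1 : ∀ n, Δt⁻¹ • (φ (n+1) - φ n) = -(M • A (μ n)) - c n)
    (hc : ∀ n, ⟪c n, μ n⟫ = ⟪g n, (2:ℝ)⁻¹ • (u n + u (n+1))⟫)
    (h2 : ∀ n, μ n = lam • B ((2:ℝ)⁻¹ • (φ n + φ (n+1)))
        + (lam * ((r n + r (n+1)) / 2) / Real.sqrt (E n)) • f n)
    (h3 : ∀ n, (r (n+1) - r n) / Δt
        = ⟪f n, Δt⁻¹ • (φ (n+1) - φ n)⟫ / (2 * Real.sqrt (E n)))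
    (h4 : ∀ n, Δt⁻¹ • (u (n+1) - u n) = -(ν • D ((2:ℝ)⁻¹ • (u n + u (n+1)))) + g n) :
    ∀ n : ℕ,
      ((1/2) * ‖u (n+1)‖ ^ 2 + (lam / 2) * ⟪B (φ (n+1)), φ (n+1)⟫ + lam * (r (n+1)) ^ 2)
        - ((1/2) * ‖u n‖ ^ 2 + (lam / 2) * ⟪B (φ n), φ n⟫ + lam * (r n) ^ 2)
      = -Δt * (M * ⟪A (μ n), μ n⟫
          + ν * ⟪D ((2:ℝ)⁻¹ • (u n + u (n+1))), (2:ℝ)⁻¹ • (u n + u (n+1))⟫) ∧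
      -Δt * (M * ⟪A (μ n), μ n⟫
          + ν * ⟪D ((2:ℝ)⁻¹ • (u n + u (n+1))), (2:ℝ)⁻¹ • (u n + u (n+1))⟫) ≤ 0 := by
  intro n
  have sE : 0 < Real.sqrt (E n) := Real.sqrt_pos.2 (hE n)
  have hmul : ∀ x y : ℝ, Δt⁻¹ * x = y → x = Δt * y := by
    intro x y h
    rw [← h, ← mul_assoc, mul_inv_cancel₀ hΔt.ne', one_mul]
  -- e1 : pairing of phase equation with μ
  have e1 : ⟪φ (n+1) - φ n, μ n⟫
      = Δt * (-(M * ⟪A (μ n), μ n⟫) - ⟪g n, (2:ℝ)⁻¹ • (u n + u (n+1))⟫) := by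
    refine hmul _ _ ?_
    have h : ⟪Δt⁻¹ • (φ (n+1) - φ n), μ n⟫ = ⟪-(M • A (μ n)) - c n, μ n⟫ := by
      rw [h1 n]
    simp only [real_inner_smul_left, inner_sub_left, inner_neg_left, hc n] at h
    rw [inner_sub_left]
    linear_combination h
  -- e3 : sqrt relation from r-equation
  have e3 : ⟪f n, φ (n+1) - φ n⟫ = 2 * Real.sqrt (E n) * (r (n+1) - r n) := by
    have h := h3 n
    rw [real_inner_smul_right] at h
    field_simp at h
    have h' : (2 * Real.sqrt (E n) * (r (n+1) - r n)) * Δt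
        = ⟪f n, φ (n+1) - φ n⟫ * Δt := by linear_combination Δt * h
    exact (mul_right_cancel₀ hΔt.ne' h').symm
  -- e2 : expand ⟪φ1-φ0, μ⟫ via definition of μ
  have e2 : ⟪φ (n+1) - φ n, μ n⟫
      = lam * ((1/2) * (⟪B (φ (n+1)), φ (n+1)⟫ - ⟪B (φ n), φ n⟫))
        + lam * (r (n+1)^2 - r n ^2) := by
    have c1 : ⟪φ (n+1), B (φ n)⟫ = ⟪φ n, B (φ (n+1))⟫ := by
      rw [← hBsym, real_inner_comm]
    have hB : ⟪φ (n+1) - φ n, B ((2:ℝ)⁻¹ • (φ n + φ (n+1)))⟫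
        = (1/2) * (⟪B (φ (n+1)), φ (n+1)⟫ - ⟪B (φ n), φ n⟫) := by
      simp only [map_smul, map_add, real_inner_smul_right, inner_sub_left,
        inner_add_right]
      rw [hBsym (φ (n+1)) (φ (n+1)), hBsym (φ n) (φ n)]
      linarith [c1]
    have h := congrArg (fun x : H => ⟪φ (n+1) - φ n, x⟫) (h2 n)
    simp only [inner_add_right, real_inner_smul_right] at h
    rw [real_inner_comm (f n) (φ (n+1) - φ n), e3, hB] at h
    rw [h]
    field_simp
    ring
  -- e4 : momentum equation paired with ub
  have e4 : (1/2) * (‖u (n+1)‖^2 - ‖u n‖^2)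
      = Δt * (-(ν * ⟪D ((2:ℝ)⁻¹ • (u n + u (n+1))), (2:ℝ)⁻¹ • (u n + u (n+1))⟫)
          + ⟪g n, (2:ℝ)⁻¹ • (u n + u (n+1))⟫) := by
    have hu : ⟪u (n+1) - u n, (2:ℝ)⁻¹ • (u n + u (n+1))⟫
        = (1/2) * (‖u (n+1)‖^2 - ‖u n‖^2) := by
      simp only [inner_sub_left, real_inner_smul_right, inner_add_right]
      rw [real_inner_self_eq_norm_sq (u (n+1)), real_inner_self_eq_norm_sq (u n),
        real_inner_comm (u (n+1)) (u n)]
      ring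
    rw [← hu]
    refine hmul _ _ ?_
    have h : ⟪Δt⁻¹ • (u (n+1) - u n), (2:ℝ)⁻¹ • (u n + u (n+1))⟫
        = ⟪-(ν • D ((2:ℝ)⁻¹ • (u n + u (n+1)))) + g n, (2:ℝ)⁻¹ • (u n + u (n+1))⟫ := by
      rw [h4 n]
    rw [real_inner_smul_left, inner_add_left, inner_neg_left, real_inner_smul_left] at h
    exact h
  constructor
  · linear_combination e4 + e1 - e2
  · have t1 : 0 ≤ Δt * (M * ⟪A (μ n), μ n⟫) :=
      mul_nonneg hΔt.le (mul_nonneg hM.le (hApsd _))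
    have t2 : 0 ≤ Δt * (ν * ⟪D ((2:ℝ)⁻¹ • (u n + u (n+1))), (2:ℝ)⁻¹ • (u n + u (n+1))⟫) :=
      mul_nonneg hΔt.le (mul_nonneg hν.le (hDpsd _))
    nlinarith [t1, t2]
end

section
/- Lipschitz-type bound for the normalized SAV nonlinearity: let F(s) = (1/(4ε²))(1−s²)², fix K > 0 and δ > 0, and define G(φ) = F'(φ)/√(E₁(φ)+δ) where E₁(φ) = ∫_Ω F(φ) dx over a bounded domain Ω. Then for all φ, ψ ∈ L^∞(Ω) with ‖φ‖_∞ ≤ K and ‖ψ‖_∞ ≤ K, there exists a constant C = C(K, δ, ε, |Ω|) such that ‖G(φ) − G(ψ)‖_{L²(Ω)} ≤ C‖φ − ψ‖_{L²(Ω)}. -/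
open MeasureTheory

/-- The double-well potential F(s) = (1 − s²)²/(4ε²). -/
noncomputable def Fpot (ε s : ℝ) : ℝ := (1 - s ^ 2) ^ 2 / (4 * ε ^ 2)

/-- E₁(φ) = ∫_Ω F(φ) dμ. -/
noncomputable def E1fun {Ω : Type*} [MeasurableSpace Ω] (μ : Measure Ω) (ε : ℝ)
    (φ : Ω → ℝ) : ℝ := ∫ x, Fpot ε (φ x) ∂μ

/-- The normalized SAV nonlinearity G(φ) = F'(φ)/√(E₁(φ) + δ). -/
noncomputable def Gfun {Ω : Type*} [MeasurableSpace Ω] (μ : Measure Ω) (ε δ : ℝ)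
    (φ : Ω → ℝ) (x : Ω) : ℝ :=
  deriv (Fpot ε) (φ x) / Real.sqrt (E1fun μ ε φ + δ)


lemma deriv_Fpot' (ε : ℝ) (hε : ε ≠ 0) (s : ℝ) :
    deriv (fun t : ℝ => (1 - t ^ 2) ^ 2 / (4 * ε ^ 2)) s = (s ^ 3 - s) / ε ^ 2 := by
  have h2 : HasDerivAt (fun t : ℝ => 1 - t ^ 2) (-(2 * s)) s := by
    simpa using (hasDerivAt_pow 2 s).const_sub 1
  have h3 := (h2.pow 2).div_const (4 * ε ^ 2)
  rw [show deriv (fun t : ℝ => (1 - t ^ 2) ^ 2 / (4 * ε ^ 2)) s = _ from h3.deriv]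
  field_simp
  ring

lemma inv_sqrt_diff {a b δ : ℝ} (hδ : 0 < δ) (ha : δ ≤ a) (hb : δ ≤ b) :
    |1 / Real.sqrt a - 1 / Real.sqrt b| ≤ |a - b| / (2 * δ * Real.sqrt δ) := by
  set u := Real.sqrt a
  set v := Real.sqrt b
  set w := Real.sqrt δ
  have hw : 0 < w := Real.sqrt_pos.mpr hδ
  have hu : w ≤ u := Real.sqrt_le_sqrt ha
  have hv : w ≤ v := Real.sqrt_le_sqrt hb
  have hu0 : 0 < u := lt_of_lt_of_le hw hu
  have hv0 : 0 < v := lt_of_lt_of_le hw hv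
  have hu2 : u ^ 2 = a := Real.sq_sqrt (hδ.le.trans ha)
  have hv2 : v ^ 2 = b := Real.sq_sqrt (hδ.le.trans hb)
  have hw2 : w ^ 2 = δ := Real.sq_sqrt hδ.le
  have hab : |a - b| = |u - v| * (u + v) := by
    rw [← hu2, ← hv2]
    have : u ^ 2 - v ^ 2 = (u - v) * (u + v) := by ring
    rw [this, abs_mul, abs_of_pos (show (0:ℝ) < u + v by linarith)]
  have hid : 1 / u - 1 / v = (v - u) / (u * v) := by
    field_simp
  rw [hid, hab, abs_div, abs_of_pos (mul_pos hu0 hv0)]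
  rw [div_le_div_iff₀ (mul_pos hu0 hv0) (by positivity)]
  have hvu : |v - u| = |u - v| := abs_sub_comm v u
  rw [hvu, ← hw2]
  have h1 : w * w ≤ u * v := mul_le_mul hu hv hw.le hu0.le
  have h2 : 2 * w ≤ u + v := by linarith
  nlinarith [abs_nonneg (u - v), mul_le_mul h2 h1 (by positivity) (by linarith)]

lemma lip_deriv' {ε K p q : ℝ} (hε : ε ≠ 0) (hK : 0 < K) (hp : |p| ≤ K) (hq : |q| ≤ K) :
    |(p ^ 3 - p) / ε ^ 2 - (q ^ 3 - q) / ε ^ 2| ≤ (3 * K ^ 2 + 1) / ε ^ 2 * |p - q| := by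
  have he2 : (0:ℝ) < ε ^ 2 := by positivity
  have hp2 : p ^ 2 ≤ K ^ 2 := by nlinarith [abs_le.1 hp, abs_le.1 hq]
  have hq2 : q ^ 2 ≤ K ^ 2 := by nlinarith [abs_le.1 hp, abs_le.1 hq]
  have hpq : |p * q| ≤ K ^ 2 := by
    rw [abs_mul]; nlinarith [abs_nonneg p, abs_nonneg q]
  have hfac : (p ^ 3 - p) / ε ^ 2 - (q ^ 3 - q) / ε ^ 2
      = ((p - q) * (p ^ 2 + p * q + q ^ 2 - 1)) / ε ^ 2 := by
    field_simp; ring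
  rw [hfac, abs_div, abs_of_pos he2, abs_mul]
  rw [div_le_iff₀ he2]
  have hX : |p ^ 2 + p * q + q ^ 2 - 1| ≤ 3 * K ^ 2 + 1 := by
    rw [abs_le]
    constructor <;> nlinarith [neg_abs_le (p * q), le_abs_self (p * q)]
  have := mul_le_mul_of_nonneg_left hX (abs_nonneg (p - q))
  calc |p - q| * |p ^ 2 + p * q + q ^ 2 - 1| ≤ |p - q| * (3 * K ^ 2 + 1) := this
    _ = (3 * K ^ 2 + 1) / ε ^ 2 * |p - q| * ε ^ 2 := by field_simp

lemma lip_F' {ε K p q : ℝ} (hε : ε ≠ 0) (hK : 0 < K) (hp : |p| ≤ K) (hq : |q| ≤ K) :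
    |(1 - p ^ 2) ^ 2 / (4 * ε ^ 2) - (1 - q ^ 2) ^ 2 / (4 * ε ^ 2)|
      ≤ (K ^ 3 + K) / ε ^ 2 * |p - q| := by
  have he2 : (0:ℝ) < 4 * ε ^ 2 := by positivity
  have hp2 : p ^ 2 ≤ K ^ 2 := by nlinarith [abs_le.1 hp, abs_le.1 hq]
  have hq2 : q ^ 2 ≤ K ^ 2 := by nlinarith [abs_le.1 hp, abs_le.1 hq]
  have hfac : (1 - p ^ 2) ^ 2 / (4 * ε ^ 2) - (1 - q ^ 2) ^ 2 / (4 * ε ^ 2)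
      = ((p - q) * (-((p + q) * (2 - p ^ 2 - q ^ 2)))) / (4 * ε ^ 2) := by
    field_simp; ring
  rw [hfac, abs_div, abs_of_pos he2, abs_mul, abs_neg, abs_mul]
  have h1 : |p + q| ≤ 2 * K := by
    calc |p + q| ≤ |p| + |q| := abs_add_le _ _
      _ ≤ 2 * K := by linarith
  have h2 : |2 - p ^ 2 - q ^ 2| ≤ 2 * K ^ 2 + 2 := by
    rw [abs_le]; constructor <;> nlinarith [sq_nonneg p, sq_nonneg q]
  have h3 : |p + q| * |2 - p ^ 2 - q ^ 2| ≤ 2 * K * (2 * K ^ 2 + 2) :=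
    mul_le_mul h1 h2 (abs_nonneg _) (by positivity)
  rw [div_le_iff₀ he2]
  have := mul_le_mul_of_nonneg_left h3 (abs_nonneg (p - q))
  calc |p - q| * (|p + q| * |2 - p ^ 2 - q ^ 2|) ≤ |p - q| * (2 * K * (2 * K ^ 2 + 2)) := this
    _ = (K ^ 3 + K) / ε ^ 2 * |p - q| * (4 * ε ^ 2) := by field_simp; ring

lemma bound_deriv' {ε K q : ℝ} (hε : ε ≠ 0) (hK : 0 < K) (hq : |q| ≤ K) :
    |(q ^ 3 - q) / ε ^ 2| ≤ (K ^ 3 + K) / ε ^ 2 := by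
  have he2 : (0:ℝ) < ε ^ 2 := by positivity
  rw [abs_div, abs_of_pos he2, div_le_div_iff_of_pos_right he2]
  calc |q ^ 3 - q| ≤ |q ^ 3| + |q| := abs_sub _ _
    _ = |q| ^ 3 + |q| := by rw [abs_pow]
    _ ≤ K ^ 3 + K := by nlinarith [abs_nonneg q, pow_le_pow_left₀ (abs_nonneg q) hq 3]

lemma integrable_of_abs_le' {Ω : Type*} [MeasurableSpace Ω] (μ : Measure Ω) [IsFiniteMeasure μ]
    {f : Ω → ℝ} (hf : Measurable f) {c : ℝ} (h : ∀ x, |f x| ≤ c) : Integrable f μ :=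
  (integrable_const c).mono' hf.aestronglyMeasurable
    (ae_of_all _ fun x => by simpa [Real.norm_eq_abs] using h x)

lemma cs_sq' {Ω : Type*} [MeasurableSpace Ω] (μ : Measure Ω) [IsFiniteMeasure μ]
    {f : Ω → ℝ} (hf : Measurable f) {c : ℝ} (hc : ∀ x, |f x| ≤ c) :
    (∫ x, |f x| ∂μ) ^ 2 ≤ (μ Set.univ).toReal * ∫ x, f x ^ 2 ∂μ := by
  have int1 : Integrable (fun x => |f x|) μ :=
    integrable_of_abs_le' μ hf.abs (fun x => by simpa using hc x)
  have int2 : Integrable (fun x => f x ^ 2) μ :=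
    integrable_of_abs_le' μ (hf.pow_const 2) (c := c ^ 2) (fun x => by
      rw [abs_pow]
      exact pow_le_pow_left₀ (abs_nonneg _) (hc x) 2)
  have hS : 0 ≤ ∫ x, f x ^ 2 ∂μ := integral_nonneg fun x => sq_nonneg _
  have hI : 0 ≤ ∫ x, |f x| ∂μ := integral_nonneg fun x => abs_nonneg _
  have hVnn : (0:ℝ) ≤ (μ Set.univ).toReal := ENNReal.toReal_nonneg
  rcases eq_or_lt_of_le hI with h0 | hIpos
  · rw [← h0]; simpa using mul_nonneg hVnn hS
  · have hV : 0 < (μ Set.univ).toReal := by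
      rcases eq_or_lt_of_le hVnn with h0' | h' 
      · exfalso
        have hz : μ Set.univ = 0 :=
          ((ENNReal.toReal_eq_zero_iff _).1 h0'.symm).resolve_right (measure_ne_top μ _)
        have hμ : μ = 0 := MeasureTheory.Measure.measure_univ_eq_zero.1 hz
        rw [hμ] at hIpos
        simp at hIpos
      · exact h'
    set V := (μ Set.univ).toReal with hVdef
    set I := ∫ x, |f x| ∂μ with hIdef
    set S := ∫ x, f x ^ 2 ∂μ with hSdef
    have hpt : ∀ x, 2 * (I / V) * |f x| ≤ f x ^ 2 + (I / V) ^ 2 := fun x => by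
      nlinarith [sq_nonneg (|f x| - I / V), sq_abs (f x)]
    have hmono : ∫ x, 2 * (I / V) * |f x| ∂μ ≤ ∫ x, (f x ^ 2 + (I / V) ^ 2) ∂μ :=
      integral_mono (int1.const_mul _) (int2.add (integrable_const _)) hpt
    rw [integral_const_mul, integral_add int2 (integrable_const _), integral_const,
      smul_eq_mul] at hmono
    have hV0 : V ≠ 0 := ne_of_gt hV
    have key : 2 * (I / V) * I ≤ S + V * (I / V) ^ 2 := hmono
    have key2 : 2 * I ^ 2 ≤ S * V + I ^ 2 := by
      have h := mul_le_mul_of_nonneg_right key (le_of_lt hV)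
      calc 2 * I ^ 2 = 2 * (I / V) * I * V := by field_simp
        _ ≤ (S + V * (I / V) ^ 2) * V := h
        _ = S * V + I ^ 2 := by field_simp
    linarith

set_option maxHeartbeats 1000000 in
/-- Lipschitz-type bound for the normalized SAV nonlinearity under uniform L^∞ bounds. -/
theorem stmt_12 {Ω : Type*} [MeasurableSpace Ω] (μ : Measure Ω) [IsFiniteMeasure μ]
    (ε K δ : ℝ) (hε : 0 < ε) (hK : 0 < K) (hδ : 0 < δ) :
    ∃ C > 0, ∀ φ ψ : Ω → ℝ, Measurable φ → Measurable ψ →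
      (∀ x, |φ x| ≤ K) → (∀ x, |ψ x| ≤ K) →
      ∫ x, (Gfun μ ε δ φ x - Gfun μ ε δ ψ x) ^ 2 ∂μ
        ≤ C ^ 2 * ∫ x, (φ x - ψ x) ^ 2 ∂μ := by
  have hεne : ε ≠ 0 := ne_of_gt hε
  set V := (μ Set.univ).toReal with hVdef
  have hVnn : (0:ℝ) ≤ V := ENNReal.toReal_nonneg
  set L := (3 * K ^ 2 + 1) / ε ^ 2 with hLdef
  set M := (K ^ 3 + K) / ε ^ 2 with hMdef
  have hLpos : 0 < L := by rw [hLdef]; positivity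
  have hMpos : 0 < M := by rw [hMdef]; positivity
  have hCarg : 0 < 2 * L ^ 2 / δ + M ^ 4 * V ^ 2 / (2 * δ ^ 3) := by positivity
  refine ⟨Real.sqrt (2 * L ^ 2 / δ + M ^ 4 * V ^ 2 / (2 * δ ^ 3)),
    Real.sqrt_pos.mpr hCarg, ?_⟩
  intro φ ψ hφ hψ hφK hψK
  rw [Real.sq_sqrt hCarg.le]
  -- rewrite Gfun explicitly
  have hderiv : ∀ s : ℝ, deriv (Fpot ε) s = (s ^ 3 - s) / ε ^ 2 := fun s =>
    deriv_Fpot' ε hεne s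
  have hGeq : ∀ χ : Ω → ℝ, Gfun μ ε δ χ
      = fun x => ((χ x) ^ 3 - χ x) / ε ^ 2 / Real.sqrt (E1fun μ ε χ + δ) := fun χ => by
    funext x; unfold Gfun; rw [hderiv]
  simp only [hGeq φ, hGeq ψ]
  have hE1φ : 0 ≤ E1fun μ ε φ := integral_nonneg fun x => by unfold Fpot; positivity
  have hE1ψ : 0 ≤ E1fun μ ε ψ := integral_nonneg fun x => by unfold Fpot; positivity
  set a := E1fun μ ε φ + δ with hadef
  set b := E1fun μ ε ψ + δ with hbdef
  have ha : δ ≤ a := by rw [hadef]; linarith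
  have hb : δ ≤ b := by rw [hbdef]; linarith
  set u := Real.sqrt a with hudef
  set v := Real.sqrt b with hvdef
  set w := Real.sqrt δ with hwdef
  have hw : 0 < w := Real.sqrt_pos.mpr hδ
  have hu : w ≤ u := Real.sqrt_le_sqrt ha
  have hv : w ≤ v := Real.sqrt_le_sqrt hb
  have hu0 : 0 < u := lt_of_lt_of_le hw hu
  have hv0 : 0 < v := lt_of_lt_of_le hw hv
  have hw2 : w ^ 2 = δ := Real.sq_sqrt hδ.le
  set D : Ω → ℝ := fun x => (φ x ^ 3 - φ x) / ε ^ 2 / u - (ψ x ^ 3 - ψ x) / ε ^ 2 / v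
    with hDdef
  -- pointwise bound on |D|
  have habs : ∀ x, |D x| ≤ L / w * |φ x - ψ x| + M / (2 * δ * w) * |a - b| := by
    intro x
    have hid : D x = ((φ x ^ 3 - φ x) / ε ^ 2 - (ψ x ^ 3 - ψ x) / ε ^ 2) / u
        + (ψ x ^ 3 - ψ x) / ε ^ 2 * (1 / u - 1 / v) := by
      rw [hDdef]; ring
    rw [hid]
    calc |((φ x ^ 3 - φ x) / ε ^ 2 - (ψ x ^ 3 - ψ x) / ε ^ 2) / u
          + (ψ x ^ 3 - ψ x) / ε ^ 2 * (1 / u - 1 / v)|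
        ≤ |((φ x ^ 3 - φ x) / ε ^ 2 - (ψ x ^ 3 - ψ x) / ε ^ 2) / u|
          + |(ψ x ^ 3 - ψ x) / ε ^ 2 * (1 / u - 1 / v)| := abs_add_le _ _
      _ = |(φ x ^ 3 - φ x) / ε ^ 2 - (ψ x ^ 3 - ψ x) / ε ^ 2| / u
          + |(ψ x ^ 3 - ψ x) / ε ^ 2| * |1 / u - 1 / v| := by
            rw [abs_div, abs_of_pos hu0, abs_mul]
      _ ≤ ((3 * K ^ 2 + 1) / ε ^ 2 * |φ x - ψ x|) / w
          + (K ^ 3 + K) / ε ^ 2 * (|a - b| / (2 * δ * w)) :=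
            add_le_add
              (div_le_div₀ (by positivity) (lip_deriv' hεne hK (hφK x) (hψK x)) hw hu)
              (mul_le_mul (bound_deriv' hεne hK (hψK x)) (inv_sqrt_diff hδ ha hb)
                (abs_nonneg _) (by positivity))
      _ = L / w * |φ x - ψ x| + M / (2 * δ * w) * |a - b| := by
            rw [hLdef, hMdef]; ring
  -- squared pointwise bound
  have hsq : ∀ x, D x ^ 2
      ≤ 2 * (L / w) ^ 2 * (φ x - ψ x) ^ 2 + 2 * (M / (2 * δ * w)) ^ 2 * (a - b) ^ 2 := by
    intro x
    have h := habs x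
    have h1 : D x ^ 2 ≤ (L / w * |φ x - ψ x| + M / (2 * δ * w) * |a - b|) ^ 2 := by
      rw [← sq_abs (D x)]
      exact pow_le_pow_left₀ (abs_nonneg _) h 2
    have h2 : (L / w * |φ x - ψ x| + M / (2 * δ * w) * |a - b|) ^ 2
        ≤ 2 * (L / w * |φ x - ψ x|) ^ 2 + 2 * (M / (2 * δ * w) * |a - b|) ^ 2 := by
      nlinarith [sq_nonneg (L / w * |φ x - ψ x| - M / (2 * δ * w) * |a - b|)]
    have h3 : (L / w * |φ x - ψ x|) ^ 2 = (L / w) ^ 2 * (φ x - ψ x) ^ 2 := by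
      rw [mul_pow, sq_abs]
    have h4 : (M / (2 * δ * w) * |a - b|) ^ 2 = (M / (2 * δ * w)) ^ 2 * (a - b) ^ 2 := by
      rw [mul_pow, sq_abs]
    linarith [h1, h2, h3.le, h4.le, h3.ge, h4.ge]
  -- integrability
  have hDmeas : Measurable D := by
    rw [hDdef]
    exact ((((hφ.pow_const 3).sub hφ).div_const _).div_const _).sub
      ((((hψ.pow_const 3).sub hψ).div_const _).div_const _)
  have hDbd : ∀ x, |D x| ≤ M / w + M / w := by
    intro x
    rw [hDdef]
    calc |(φ x ^ 3 - φ x) / ε ^ 2 / u - (ψ x ^ 3 - ψ x) / ε ^ 2 / v|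
        ≤ |(φ x ^ 3 - φ x) / ε ^ 2 / u| + |(ψ x ^ 3 - ψ x) / ε ^ 2 / v| := abs_sub _ _
      _ ≤ M / w + M / w := by
          rw [abs_div ((φ x ^ 3 - φ x) / ε ^ 2) u, abs_of_pos hu0,
            abs_div ((ψ x ^ 3 - ψ x) / ε ^ 2) v, abs_of_pos hv0, hMdef]
          exact add_le_add
            (div_le_div₀ (by positivity) (bound_deriv' hεne hK (hφK x)) hw hu)
            (div_le_div₀ (by positivity) (bound_deriv' hεne hK (hψK x)) hw hv)
  have intD2 : Integrable (fun x => D x ^ 2) μ :=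
    integrable_of_abs_le' μ (hDmeas.pow_const 2) (c := (M / w + M / w) ^ 2) fun x => by
      rw [abs_pow]
      exact pow_le_pow_left₀ (abs_nonneg _) (hDbd x) 2
  have hφψbd : ∀ x, |φ x - ψ x| ≤ 2 * K := fun x =>
    calc |φ x - ψ x| ≤ |φ x| + |ψ x| := abs_sub _ _
      _ ≤ 2 * K := by linarith [hφK x, hψK x]
  have intφψ2 : Integrable (fun x => (φ x - ψ x) ^ 2) μ :=
    integrable_of_abs_le' μ ((hφ.sub hψ).pow_const 2) (c := (2 * K) ^ 2) fun x => by
      rw [abs_pow]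
      exact pow_le_pow_left₀ (abs_nonneg _) (hφψbd x) 2
  -- bound on |a - b|
  have hFbd : ∀ (χ : Ω → ℝ), (∀ x, |χ x| ≤ K) → ∀ x,
      |Fpot ε (χ x)| ≤ (1 + K ^ 2) ^ 2 / (4 * ε ^ 2) := by
    intro χ hχK x
    have hs2 : χ x ^ 2 ≤ K ^ 2 := by
      rw [← sq_abs]; exact pow_le_pow_left₀ (abs_nonneg _) (hχK x) 2
    unfold Fpot
    rw [abs_div, abs_of_pos (by positivity : (0:ℝ) < 4 * ε ^ 2), abs_pow,
      div_le_div_iff_of_pos_right (by positivity : (0:ℝ) < 4 * ε ^ 2), sq_abs]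
    nlinarith [hs2, pow_le_pow_left₀ (sq_nonneg (χ x)) hs2 2]
  have intFφ : Integrable (fun x => Fpot ε (φ x)) μ :=
    integrable_of_abs_le' μ (by unfold Fpot; exact (((measurable_const.sub (measurable_id.pow_const 2)).pow_const 2).div_const _).comp hφ)
      (hFbd φ hφK)
  have intFψ : Integrable (fun x => Fpot ε (ψ x)) μ :=
    integrable_of_abs_le' μ (by unfold Fpot; exact (((measurable_const.sub (measurable_id.pow_const 2)).pow_const 2).div_const _).comp hψ)
      (hFbd ψ hψK)
  have intabsφψ : Integrable (fun x => |φ x - ψ x|) μ :=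
    integrable_of_abs_le' μ (hφ.sub hψ).abs (c := 2 * K) fun x => by
      rw [abs_abs]; exact hφψbd x
  have hab : |a - b| ≤ M * ∫ x, |φ x - ψ x| ∂μ := by
    have heq : a - b = ∫ x, (Fpot ε (φ x) - Fpot ε (ψ x)) ∂μ := by
      rw [integral_sub intFφ intFψ, hadef, hbdef]
      unfold E1fun
      ring
    calc |a - b| = |∫ x, (Fpot ε (φ x) - Fpot ε (ψ x)) ∂μ| := by rw [heq]
      _ ≤ ∫ x, |Fpot ε (φ x) - Fpot ε (ψ x)| ∂μ := by
          simpa [Real.norm_eq_abs] using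
            norm_integral_le_integral_norm (μ := μ) (fun x => Fpot ε (φ x) - Fpot ε (ψ x))
      _ ≤ ∫ x, M * |φ x - ψ x| ∂μ := by
          refine integral_mono (intFφ.sub intFψ).abs (intabsφψ.const_mul _) fun x => ?_
          rw [hMdef]
          exact lip_F' hεne hK (hφK x) (hψK x)
      _ = M * ∫ x, |φ x - ψ x| ∂μ := integral_const_mul _ _
  have hIcs : (∫ x, |φ x - ψ x| ∂μ) ^ 2 ≤ V * ∫ x, (φ x - ψ x) ^ 2 ∂μ :=
    cs_sq' μ (hφ.sub hψ) (c := 2 * K) hφψbd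
  set S := ∫ x, (φ x - ψ x) ^ 2 ∂μ with hSdef
  have hSnn : 0 ≤ S := integral_nonneg fun x => sq_nonneg _
  have hInn : 0 ≤ ∫ x, |φ x - ψ x| ∂μ := integral_nonneg fun x => abs_nonneg _
  have hab2 : (a - b) ^ 2 ≤ M ^ 2 * (V * S) := by
    have h1 : (a - b) ^ 2 ≤ (M * ∫ x, |φ x - ψ x| ∂μ) ^ 2 := by
      rw [← sq_abs (a - b)]
      exact pow_le_pow_left₀ (abs_nonneg _) hab 2
    calc (a - b) ^ 2 ≤ (M * ∫ x, |φ x - ψ x| ∂μ) ^ 2 := h1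
      _ = M ^ 2 * (∫ x, |φ x - ψ x| ∂μ) ^ 2 := by ring
      _ ≤ M ^ 2 * (V * S) := by
          exact mul_le_mul_of_nonneg_left hIcs (by positivity)
  -- main estimate
  have hstep1 : ∫ x, D x ^ 2 ∂μ
      ≤ 2 * (L / w) ^ 2 * S + V * (2 * (M / (2 * δ * w)) ^ 2 * (a - b) ^ 2) := by
    have intg : Integrable (fun x => 2 * (L / w) ^ 2 * (φ x - ψ x) ^ 2
        + 2 * (M / (2 * δ * w)) ^ 2 * (a - b) ^ 2) μ :=
      (intφψ2.const_mul _).add (integrable_const _)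
    have h := integral_mono (f := fun x => D x ^ 2)
      (g := fun x => 2 * (L / w) ^ 2 * (φ x - ψ x) ^ 2
        + 2 * (M / (2 * δ * w)) ^ 2 * (a - b) ^ 2) intD2 intg hsq
    have e1 : ∫ x, (2 * (L / w) ^ 2 * (φ x - ψ x) ^ 2
        + 2 * (M / (2 * δ * w)) ^ 2 * (a - b) ^ 2) ∂μ
        = 2 * (L / w) ^ 2 * S + V * (2 * (M / (2 * δ * w)) ^ 2 * (a - b) ^ 2) := by
      rw [integral_add (intφψ2.const_mul (2 * (L / w) ^ 2))
        (integrable_const (2 * (M / (2 * δ * w)) ^ 2 * (a - b) ^ 2)),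
        integral_const_mul, integral_const, smul_eq_mul]
      rfl
    exact h.trans_eq e1
  calc ∫ x, D x ^ 2 ∂μ
      ≤ 2 * (L / w) ^ 2 * S + V * (2 * (M / (2 * δ * w)) ^ 2 * (a - b) ^ 2) := hstep1
    _ ≤ 2 * (L / w) ^ 2 * S + V * (2 * (M / (2 * δ * w)) ^ 2 * (M ^ 2 * (V * S))) := by
        exact add_le_add le_rfl
          (mul_le_mul_of_nonneg_left (mul_le_mul_of_nonneg_left hab2 (by positivity)) hVnn)
    _ = (2 * L ^ 2 / δ + M ^ 4 * V ^ 2 / (2 * δ ^ 3)) * S := by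
        have h2δw : (2 * δ * w) ^ 2 = 4 * δ ^ 3 := by
          have e : (2 * δ * w) ^ 2 = 4 * δ ^ 2 * w ^ 2 := by ring
          rw [e, hw2]; ring
        rw [div_pow L w, div_pow M (2 * δ * w), hw2, h2δw]
        field_simp
        ring
end
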